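/- Let E be a real inner product space, λ > 0, and let F : E → ℝ be differentiable and λ-strongly convex (i.e., x ↦ F(x) − (λ/2)‖x‖² is convex), with a global minimizer θ* ∈ E. Let G ≥ 0 and D ≥ 0, let (g_t)_{t≥0} be vectors in E with ‖g_t‖ ≤ G for all t, and define θ_{t+1} = θ_t − (1/(λ(t+1))) g_t starting from θ₀ ∈ E. If ‖θ_t − θ*‖ ≤ D for all t, then for every T ≥ 1: Σ_{t=0}^{T−1} ( F(θ_t) − F(θ*) ) ≤ (G²/(2λ)) (log T + 1) + D Σ_{t=0}^{T−1} ‖g_t − ∇F(θ_t)‖. -/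

import Mathlib

open Finset

open scoped RealInnerProductSpace

/-- First-order lower bound for a λ-strongly convex differentiable function. -/
lemma strong_conv_first_order
    {E : Type*} [NormedAddCommGroup E] [InnerProductSpace ℝ E]
    (lam : ℝ)
    (F : E → ℝ) (F' : E → E) (hF : ∀ x, HasFDerivAt F (InnerProductSpace.toDualMap ℝ E (F' x)) x)
    (hconv : ConvexOn ℝ Set.univ (fun x => F x - lam / 2 * ‖x‖ ^ 2))
    (x y : E) :
    F x + ⟪F' x, y - x⟫ + lam / 2 * ‖y - x‖ ^ 2 ≤ F y := by
  set c : ℝ → E := fun s => s • (y - x) + x with hc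
  set ψ : ℝ → ℝ := fun s => F (c s) - lam / 2 * ‖c s‖ ^ 2 with hψ
  have hψconv : ConvexOn ℝ Set.univ ψ := by
    have h := hconv.comp_affineMap (AffineMap.lineMap x y : ℝ →ᵃ[ℝ] E)
    have heq : ∀ s : ℝ, (AffineMap.lineMap x y : ℝ →ᵃ[ℝ] E) s = c s := by
      intro s
      simp [AffineMap.lineMap_apply, c]
    have hset : (AffineMap.lineMap x y : ℝ →ᵃ[ℝ] E) ⁻¹' Set.univ = (Set.univ : Set ℝ) := by
      simp
    rw [hset] at h
    refine h.congr ?_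
    intro s _
    simp [ψ, Function.comp, heq s]
  have hcd : ∀ s : ℝ, HasDerivAt c (y - x) s := by
    intro s
    have h1 : HasDerivAt (fun s : ℝ => s • (y - x)) ((1 : ℝ) • (y - x)) s :=
      (hasDerivAt_id s).smul_const (y - x)
    simpa [c] using h1.add_const x
  have hc0 : c 0 = x := by simp [c]
  have hFd : HasDerivAt (fun s => F (c s)) ⟪F' x, y - x⟫ 0 := by
    have h := (hF (c 0)).comp_hasDerivAt 0 (hcd 0)
    simp only [hc0, InnerProductSpace.toDualMap_apply_apply] at h
    exact h
  have hnd : HasDerivAt (fun s => ‖c s‖ ^ 2) (2 * ⟪x, y - x⟫) 0 := by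
    have h := (hcd 0).norm_sq
    simpa [hc0] using h
  have hψd : HasDerivAt ψ (⟪F' x, y - x⟫ - lam / 2 * (2 * ⟪x, y - x⟫)) 0 :=
    hFd.sub (hnd.const_mul (lam / 2))
  have hslope := hψconv.le_slope_of_hasDerivAt (Set.mem_univ (0 : ℝ)) (Set.mem_univ (1 : ℝ))
    zero_lt_one hψd
  rw [slope_def_field] at hslope
  have hc1 : c 1 = y := by simp [c]
  have hψ0 : ψ 0 = F x - lam / 2 * ‖x‖ ^ 2 := by simp [ψ, hc0]
  have hψ1 : ψ 1 = F y - lam / 2 * ‖y‖ ^ 2 := by simp [ψ, hc1]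
  have hslope' : ⟪F' x, y - x⟫ - lam / 2 * (2 * ⟪x, y - x⟫) ≤
      (F y - lam / 2 * ‖y‖ ^ 2) - (F x - lam / 2 * ‖x‖ ^ 2) := by
    have h10 : ((1 : ℝ) - 0) = 1 := by norm_num
    rw [h10, div_one, hψ0, hψ1] at hslope
    exact hslope
  have hexp : ‖y - x‖ ^ 2 = ‖y‖ ^ 2 - 2 * ⟪y, x⟫ + ‖x‖ ^ 2 := norm_sub_sq_real y x
  have hinner : ⟪x, y - x⟫ = ⟪x, y⟫ - ‖x‖ ^ 2 := by
    rw [inner_sub_right, real_inner_self_eq_norm_sq]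
  have hcomm : ⟪y, x⟫ = ⟪x, y⟫ := real_inner_comm x y
  have hkey : lam / 2 * ‖y‖ ^ 2 - lam / 2 * ‖x‖ ^ 2 - lam / 2 * (2 * ⟪x, y - x⟫) =
      lam / 2 * ‖y - x‖ ^ 2 := by
    rw [hexp, hinner, hcomm]; ring
  linarith [hslope', hkey]

/-- Abstract core of Theorem 2 (logarithmic regret of inexact online gradient descent
on a strongly convex objective): with `F` λ-strongly convex, global minimizer `θ*`,
updates `θ_{t+1} = θ_t − (1/(λ(t+1))) g_t`, `‖g_t‖ ≤ G` and `‖θ_t − θ*‖ ≤ D`,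
`Σ_{t<T} (F(θ_t) − F(θ*)) ≤ (G²/(2λ))(log T + 1) + D Σ_{t<T} ‖g_t − ∇F(θ_t)‖`. -/
theorem inexact_ogd_strongly_convex_log_regret
    {E : Type*} [NormedAddCommGroup E] [InnerProductSpace ℝ E]
    (lam : ℝ) (hlam : 0 < lam)
    (F : E → ℝ) (F' : E → E) (hF : ∀ x, HasFDerivAt F (InnerProductSpace.toDualMap ℝ E (F' x)) x)
    (hconv : ConvexOn ℝ Set.univ (fun x => F x - lam / 2 * ‖x‖ ^ 2))
    (θstar : E) (hmin : ∀ x, F θstar ≤ F x)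
    (G D : ℝ) (hG : 0 ≤ G) (hD : 0 ≤ D)
    (g : ℕ → E) (hg : ∀ t, ‖g t‖ ≤ G)
    (θ : ℕ → E) (hθ : ∀ t : ℕ, θ (t + 1) = θ t - (1 / (lam * (t + 1))) • g t)
    (hdist : ∀ t, ‖θ t - θstar‖ ≤ D) :
    ∀ T : ℕ, 1 ≤ T →
      ∑ t ∈ Finset.range T, (F (θ t) - F θstar) ≤
        (G ^ 2 / (2 * lam)) * (Real.log T + 1) +
          D * ∑ t ∈ Finset.range T, ‖g t - F' (θ t)‖ := by
  intro T hT
  -- distance and telescoping quantity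
  set d : ℕ → ℝ := fun t => ‖θ t - θstar‖ with hd
  set b : ℕ → ℝ := fun t => lam * t / 2 * d t ^ 2 with hb
  -- per-step bound
  have key : ∀ t : ℕ, F (θ t) - F θstar ≤
      (b t - b (t + 1)) + G ^ 2 / (2 * lam) * (1 / (t + 1)) + D * ‖g t - F' (θ t)‖ := by
    intro t
    have ht1 : (0 : ℝ) < (t : ℝ) + 1 := by positivity
    have hαpos : (0 : ℝ) < lam * ((t : ℝ) + 1) := by positivity
    set α : ℝ := 1 / (lam * ((t : ℝ) + 1)) with hα
    have hαpos' : 0 < α := by positivity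
    -- distance recursion
    have hrec : d (t + 1) ^ 2 =
        d t ^ 2 - 2 * α * ⟪g t, θ t - θstar⟫ + α ^ 2 * ‖g t‖ ^ 2 := by
      have hstep : θ (t + 1) - θstar = (θ t - θstar) - α • g t := by
        rw [hθ t]; exact sub_right_comm _ _ _
      simp only [hd]
      rw [hstep, norm_sub_sq_real, real_inner_smul_right, norm_smul, mul_pow]
      have : ‖α‖ ^ 2 = α ^ 2 := by
        rw [Real.norm_eq_abs, sq_abs]
      rw [this, real_inner_comm]
      ring
    -- strong convexity lower bound at x = θ t, y = θstar
    have hsc := strong_conv_first_order lam F F' hF hconv (θ t) θstar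
    have hsym : ‖θstar - θ t‖ = d t := by rw [hd]; exact norm_sub_rev _ _
    have hinnersym : ⟪F' (θ t), θstar - θ t⟫ = -⟪F' (θ t), θ t - θstar⟫ := by
      rw [← inner_neg_right, neg_sub]
    rw [hsym, hinnersym] at hsc
    -- error term bound
    have herr : ⟪F' (θ t) - g t, θ t - θstar⟫ ≤ ‖g t - F' (θ t)‖ * D := by
      calc ⟪F' (θ t) - g t, θ t - θstar⟫ ≤ ‖F' (θ t) - g t‖ * ‖θ t - θstar‖ :=
            real_inner_le_norm _ _
        _ = ‖g t - F' (θ t)‖ * ‖θ t - θstar‖ := by rw [norm_sub_rev]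
        _ ≤ ‖g t - F' (θ t)‖ * D :=
            mul_le_mul_of_nonneg_left (hdist t) (norm_nonneg _)
    -- split inner product
    have hsplit : ⟪F' (θ t), θ t - θstar⟫ =
        ⟪g t, θ t - θstar⟫ + ⟪F' (θ t) - g t, θ t - θstar⟫ := by
      rw [← inner_add_left]; congr 1; abel
    -- bound on ⟪g t, θ t - θstar⟫ from the recursion
    have h2αpos : (0 : ℝ) < 2 * α := by positivity
    have hginner : ⟪g t, θ t - θstar⟫ ≤
        (d t ^ 2 - d (t + 1) ^ 2) / (2 * α) + α / 2 * ‖g t‖ ^ 2 := by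
      have heq : ⟪g t, θ t - θstar⟫ =
          (d t ^ 2 - d (t + 1) ^ 2 + α ^ 2 * ‖g t‖ ^ 2) / (2 * α) := by
        rw [eq_div_iff (ne_of_gt h2αpos)]
        linear_combination hrec
      have heq2 : α ^ 2 * ‖g t‖ ^ 2 / (2 * α) = α / 2 * ‖g t‖ ^ 2 := by
        rw [div_eq_iff (ne_of_gt h2αpos)]
        ring
      rw [heq, add_div, heq2]
    -- ‖g t‖² ≤ G²
    have hg2 : ‖g t‖ ^ 2 ≤ G ^ 2 := by
      have := hg t
      nlinarith [norm_nonneg (g t)]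
    -- α identities
    have hinvα : 1 / (2 * α) = lam * ((t : ℝ) + 1) / 2 := by
      rw [hα, mul_one_div, one_div_div]
    have hα2 : α / 2 * ‖g t‖ ^ 2 ≤ G ^ 2 / (2 * lam) * (1 / ((t : ℝ) + 1)) := by
      have h1 : α / 2 * ‖g t‖ ^ 2 ≤ α / 2 * G ^ 2 := by
        apply mul_le_mul_of_nonneg_left hg2
        positivity
      have h2 : α / 2 * G ^ 2 = G ^ 2 / (2 * lam) * (1 / ((t : ℝ) + 1)) := by
        have hlne : lam ≠ 0 := ne_of_gt hlam
        have htne : ((t : ℝ) + 1) ≠ 0 := ne_of_gt ht1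
        rw [hα]
        field_simp
      linarith
    -- telescoping identity
    have hbid : (d t ^ 2 - d (t + 1) ^ 2) / (2 * α) - lam / 2 * d t ^ 2 = b t - b (t + 1) := by
      rw [div_eq_mul_one_div, hinvα, hb]
      push_cast
      ring
    -- combine
    have hsq : lam / 2 * d t ^ 2 ≥ 0 := by positivity
    calc F (θ t) - F θstar
        ≤ ⟪F' (θ t), θ t - θstar⟫ - lam / 2 * d t ^ 2 := by linarith [hsc]
      _ = ⟪g t, θ t - θstar⟫ + ⟪F' (θ t) - g t, θ t - θstar⟫ - lam / 2 * d t ^ 2 := by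
          rw [hsplit]
      _ ≤ (d t ^ 2 - d (t + 1) ^ 2) / (2 * α) + α / 2 * ‖g t‖ ^ 2
            + ‖g t - F' (θ t)‖ * D - lam / 2 * d t ^ 2 := by
          linarith [hginner, herr]
      _ ≤ (b t - b (t + 1)) + G ^ 2 / (2 * lam) * (1 / ((t : ℝ) + 1))
            + D * ‖g t - F' (θ t)‖ := by
          rw [← hbid]
          have : ‖g t - F' (θ t)‖ * D = D * ‖g t - F' (θ t)‖ := mul_comm _ _
          linarith [hα2]
  -- sum the per-step bounds
  have hsum : ∑ t ∈ Finset.range T, (F (θ t) - F θstar) ≤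
      ∑ t ∈ Finset.range T, ((b t - b (t + 1)) + G ^ 2 / (2 * lam) * (1 / ((t : ℝ) + 1))
        + D * ‖g t - F' (θ t)‖) :=
    Finset.sum_le_sum fun t _ => key t
  rw [Finset.sum_add_distrib, Finset.sum_add_distrib] at hsum
  -- telescoping sum
  have htel : ∑ t ∈ Finset.range T, (b t - b (t + 1)) ≤ 0 := by
    rw [Finset.sum_range_sub' b]
    have hb0 : b 0 = 0 := by simp [hb]
    have hbT : 0 ≤ b T := by rw [hb]; positivity
    linarith
  -- harmonic sum bound
  have hharm : ∑ t ∈ Finset.range T, (1 / ((t : ℝ) + 1)) ≤ Real.log T + 1 := by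
    have hcast : ((harmonic T : ℚ) : ℝ) = ∑ t ∈ Finset.range T, (1 / ((t : ℝ) + 1)) := by
      rw [harmonic_eq_sum_Icc]
      push_cast
      rw [← Finset.Ico_add_one_right_eq_Icc, Finset.sum_Ico_eq_sum_range]
      refine Finset.sum_congr rfl fun i _ => ?_
      push_cast
      rw [one_div, add_comm]
    have := harmonic_le_one_add_log T
    rw [hcast] at this
    linarith
  have hfac : (0 : ℝ) ≤ G ^ 2 / (2 * lam) := by positivity
  have h2 : ∑ t ∈ Finset.range T, G ^ 2 / (2 * lam) * (1 / ((t : ℝ) + 1)) ≤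
      G ^ 2 / (2 * lam) * (Real.log T + 1) := by
    rw [← Finset.mul_sum]
    exact mul_le_mul_of_nonneg_left hharm hfac
  have h3 : ∑ t ∈ Finset.range T, D * ‖g t - F' (θ t)‖ =
      D * ∑ t ∈ Finset.range T, ‖g t - F' (θ t)‖ := by
    rw [Finset.mul_sum]
  linarith [hsum, htel, h2, h3.le, h3.ge]
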